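/- Let Z_i (i = 1,…,N) be block-diagonal instrument matrices built from row vectors z_{it}' (t = 1,…,R), and let U be an R×R invertible upper-triangular matrix. Suppose there exists an invertible matrix C with C·Z_i' = Z_i'·U for all i. Then for any matrices A_i (R×p), B_i (R×q), and any positive definite weighting matrix built from residuals, the quadratic form Σ_i A_i'U'Z_i (Σ_i Z_i'U e_i e_i' U'Z_i)⁻¹ Σ_i Z_i'U B_i equals Σ_i A_i'Z_i (Σ_i Z_i' e_i e_i' Z_i)⁻¹ Σ_i Z_i' B_i, provided the inner matrix Σ_i Z_i' e_i e_i' Z_i is invertible. -/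
import Mathlib


open Matrix

/-- If `C` is invertible with `C Z_iᵀ = Z_iᵀ U` for all `i`, then the GMM quadratic
forms built with the `U`-transformed data coincide with those built with the
untransformed data. -/
theorem gmm_quadratic_form_invariance
    (N R k p q : ℕ)
    (Z : Fin N → Matrix (Fin R) (Fin k) ℝ)
    (U : Matrix (Fin R) (Fin R) ℝ) (hU : IsUnit U)
    (C : Matrix (Fin k) (Fin k) ℝ) (hC : IsUnit C)
    (hCZ : ∀ i, C * (Z i)ᵀ = (Z i)ᵀ * U)
    (e : Fin N → Fin R → ℝ)
    (A : Fin N → Matrix (Fin R) (Fin p) ℝ)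
    (B : Fin N → Matrix (Fin R) (Fin q) ℝ)
    (hW : IsUnit (∑ i, (Z i)ᵀ * vecMulVec (e i) (e i) * Z i)) :
    (∑ i, (A i)ᵀ * Uᵀ * Z i) *
        (∑ i, (Z i)ᵀ * vecMulVec (U *ᵥ e i) (U *ᵥ e i) * Z i)⁻¹ *
        (∑ i, (Z i)ᵀ * U * B i)
      = (∑ i, (A i)ᵀ * Z i) *
        (∑ i, (Z i)ᵀ * vecMulVec (e i) (e i) * Z i)⁻¹ *
        (∑ i, (Z i)ᵀ * B i) := by
  set W := ∑ i, (Z i)ᵀ * vecMulVec (e i) (e i) * Z i with hWdef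
  have hUZ : ∀ i, Uᵀ * Z i = Z i * Cᵀ := by
    intro i
    have := congrArg Matrix.transpose (hCZ i)
    simpa [Matrix.transpose_mul] using this.symm
  have hmv : ∀ x : Fin R → ℝ,
      vecMulVec (U *ᵥ x) (U *ᵥ x) = U * vecMulVec x x * Uᵀ := by
    intro x
    ext a b
    simp only [vecMulVec_apply, Matrix.mul_apply, Matrix.mulVec, dotProduct,
      Matrix.transpose_apply]
    rw [Finset.sum_mul_sum]
    rw [Finset.sum_comm]
    refine Finset.sum_congr rfl fun j _ => ?_
    rw [Finset.sum_mul]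
    exact Finset.sum_congr rfl fun i _ => by ring
  have hinner : ∀ i, (Z i)ᵀ * vecMulVec (U *ᵥ e i) (U *ᵥ e i) * Z i
      = C * ((Z i)ᵀ * vecMulVec (e i) (e i) * Z i) * Cᵀ := by
    intro i
    rw [hmv]
    calc (Z i)ᵀ * (U * vecMulVec (e i) (e i) * Uᵀ) * Z i
        = ((Z i)ᵀ * U) * vecMulVec (e i) (e i) * (Uᵀ * Z i) := by
          simp only [Matrix.mul_assoc]
      _ = (C * (Z i)ᵀ) * vecMulVec (e i) (e i) * (Z i * Cᵀ) := by
          rw [hCZ i, hUZ i]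
      _ = C * ((Z i)ᵀ * vecMulVec (e i) (e i) * Z i) * Cᵀ := by
          simp only [Matrix.mul_assoc]
  have hsum : (∑ i, (Z i)ᵀ * vecMulVec (U *ᵥ e i) (U *ᵥ e i) * Z i) = C * W * Cᵀ := by
    simp only [hinner, ← Finset.sum_mul, ← Finset.mul_sum, hWdef]
  have hA : (∑ i, (A i)ᵀ * Uᵀ * Z i) = (∑ i, (A i)ᵀ * Z i) * Cᵀ := by
    rw [Matrix.sum_mul]
    refine Finset.sum_congr rfl fun i _ => ?_
    rw [Matrix.mul_assoc, hUZ i, ← Matrix.mul_assoc]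
  have hB : (∑ i, (Z i)ᵀ * U * B i) = C * (∑ i, (Z i)ᵀ * B i) := by
    rw [Matrix.mul_sum]
    refine Finset.sum_congr rfl fun i _ => ?_
    rw [← hCZ i, Matrix.mul_assoc]
  have hCd : IsUnit C.det := (Matrix.isUnit_iff_isUnit_det C).mp hC
  have hCTd : IsUnit Cᵀ.det := by simpa [Matrix.det_transpose] using hCd
  rw [hsum, hA, hB, Matrix.mul_inv_rev, Matrix.mul_inv_rev]
  calc ((∑ i, (A i)ᵀ * Z i) * Cᵀ) * (Cᵀ⁻¹ * (W⁻¹ * C⁻¹)) * (C * ∑ i, (Z i)ᵀ * B i)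
      = (∑ i, (A i)ᵀ * Z i) * (Cᵀ * Cᵀ⁻¹) * W⁻¹ * (C⁻¹ * C) * (∑ i, (Z i)ᵀ * B i) := by
        simp only [Matrix.mul_assoc]
    _ = _ := by
        rw [Matrix.mul_nonsing_inv _ hCTd, Matrix.nonsing_inv_mul _ hCd]
        simp [Matrix.mul_assoc]
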